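/- arXiv:2107.09459 — 2 statements merged into one kernel-verified Lean document; each statement's English description precedes it below -/
import Mathlib

section
/- Let K be an n×n real matrix and D₁,…,D_m diagonal real matrices such that K + D_t is entrywise nonnegative for each t. Then for nonnegative α₁,…,α_m summing to 1, r(α₁(K+D₁) + ⋯ + α_m(K+D_m)) ≤ α₁ r(K+D₁) + ⋯ + α_m r(K+D_m). -/
open scoped ENNReal
open Finset
noncomputable def specRad {n : ℕ} (A : Matrix (Fin n) (Fin n) ℝ) : ℝ≥0∞ :=
  spectralRadius ℂ (A.map (algebraMap ℝ ℂ))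
noncomputable def opNorm {n : ℕ} (A : Matrix (Fin n) (Fin n) ℝ) : ℝ :=
  ‖Matrix.toEuclideanCLM (𝕜 := ℝ) A‖

open scoped NNReal

attribute [local instance] Matrix.linftyOpNormedRing Matrix.linftyOpNormedAlgebra

lemma entry_pow_nonneg {n : ℕ} {A : Matrix (Fin n) (Fin n) ℝ} (hA : ∀ i j, 0 ≤ A i j) :
    ∀ k, ∀ i j, 0 ≤ (A ^ k) i j := by
  intro k
  induction k with
  | zero => intro i j; simp [pow_zero, Matrix.one_apply]; split <;> norm_num
  | succ k ih =>
    intro i j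
    rw [pow_succ, Matrix.mul_apply]
    exact Finset.sum_nonneg fun l _ => mul_nonneg (ih i l) (hA l j)

lemma specRad_le_of_mulVec_le {n : ℕ} {A : Matrix (Fin n) (Fin n) ℝ} (hA : ∀ i j, 0 ≤ A i j)
    {x : Fin n → ℝ} (hx : ∀ i, 0 < x i) {c : ℝ}
    (hle : ∀ i, A.mulVec x i ≤ c * x i) :
    specRad A ≤ ENNReal.ofReal c := by
  rw [specRad, spectralRadius]
  refine iSup₂_le fun μ hμ => ?_
  set M := A.map (algebraMap ℝ ℂ) with hM
  have hμ' : μ ∈ spectrum ℂ (Matrix.toLinAlgEquiv' M) := by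
    rwa [AlgEquiv.spectrum_eq]
  obtain ⟨v, hv⟩ := (Module.End.hasEigenvalue_iff_mem_spectrum.mpr hμ').exists_hasEigenvector
  have hv0 : v ≠ 0 := hv.right
  have hMv : M.mulVec v = μ • v := by
    have := hv.apply_eq_smul
    simpa [Matrix.toLinAlgEquiv'_apply, Matrix.toLin'_apply] using this
  set w : Fin n → ℝ := fun i => ‖v i‖ with hw
  have hwkey : ∀ i, ‖μ‖ * w i ≤ A.mulVec w i := by
    intro i
    have h1 : ‖μ‖ * w i = ‖(M.mulVec v) i‖ := by
      rw [hMv]; simp [hw, norm_mul]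
    rw [h1, Matrix.mulVec, dotProduct]
    calc ‖∑ j, M i j * v j‖ ≤ ∑ j, ‖M i j * v j‖ := norm_sum_le _ _
      _ = ∑ j, A i j * w j := by
          refine Finset.sum_congr rfl fun j _ => ?_
          rw [norm_mul, hM]
          simp only [Matrix.map_apply, Complex.coe_algebraMap]
          rw [Complex.norm_real, Real.norm_eq_abs, abs_of_nonneg (hA i j)]
      _ = A.mulVec w i := by rw [Matrix.mulVec, dotProduct]
  -- pick maximizing index
  obtain ⟨i₀, hi0'⟩ : ∃ i₀, v i₀ ≠ 0 := by
    by_contra h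
    push_neg at h
    exact hv0 (funext fun i => h i)
  have hne : (Finset.univ : Finset (Fin n)).Nonempty := ⟨i₀, mem_univ _⟩
  obtain ⟨i, _, hi⟩ := Finset.exists_max_image univ (fun i => w i / x i) hne
  set μm := w i / x i with hμm
  have hμm_pos : 0 < μm := by
    have h0 : 0 < w i₀ / x i₀ := div_pos (norm_pos_iff.mpr hi0') (hx i₀)
    exact lt_of_lt_of_le h0 (hi i₀ (mem_univ _))
  have hwle : ∀ j, w j ≤ μm * x j := fun j => by
    have := hi j (mem_univ _)
    calc w j = (w j / x j) * x j := (div_mul_cancel₀ _ (hx j).ne').symm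
      _ ≤ μm * x j := mul_le_mul_of_nonneg_right this (le_of_lt (hx j))
  have hwi : w i = μm * x i := by rw [hμm, div_mul_cancel₀ _ (hx i).ne']
  have key : ‖μ‖ * (μm * x i) ≤ μm * (c * x i) := by
    calc ‖μ‖ * (μm * x i) = ‖μ‖ * w i := by rw [hwi]
      _ ≤ A.mulVec w i := hwkey i
      _ = ∑ j, A i j * w j := by rw [Matrix.mulVec, dotProduct]
      _ ≤ ∑ j, A i j * (μm * x j) := by
          exact Finset.sum_le_sum fun j _ => mul_le_mul_of_nonneg_left (hwle j) (hA i j)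
      _ = μm * A.mulVec x i := by
          rw [Matrix.mulVec, dotProduct, Finset.mul_sum]
          exact Finset.sum_congr rfl fun j _ => by ring
      _ ≤ μm * (c * x i) := mul_le_mul_of_nonneg_left (hle i) (le_of_lt hμm_pos)
  have hfin : ‖μ‖ ≤ c := by
    have hpos : 0 < μm * x i := mul_pos hμm_pos (hx i)
    nlinarith [hx i, hμm_pos]
  calc (‖μ‖₊ : ℝ≥0∞) = ENNReal.ofReal ‖μ‖ := (ofReal_norm μ).symm
    _ ≤ ENNReal.ofReal c := ENNReal.ofReal_le_ofReal hfin


lemma exists_pos_mulVec_le {n : ℕ} {A : Matrix (Fin n) (Fin n) ℝ} (hA : ∀ i j, 0 ≤ A i j)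
    {c : ℝ} (hc : specRad A < ENNReal.ofReal c) :
    ∃ x : Fin n → ℝ, (∀ i, 0 < x i) ∧ ∀ i, A.mulVec x i ≤ c * x i := by
  have hc0 : 0 < c := by
    by_contra h
    push_neg at h
    rw [ENNReal.ofReal_eq_zero.mpr h] at hc
    exact (not_lt_of_ge zero_le) hc
  rcases Nat.eq_zero_or_pos n with hn | hn
  · subst hn
    exact ⟨fun _ => 1, fun i => i.elim0, fun i => i.elim0⟩
  haveI : CompleteSpace (Matrix (Fin n) (Fin n) ℂ) := FiniteDimensional.complete ℂ _
  set M := A.map (algebraMap ℝ ℂ) with hMdef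
  have hG := spectrum.pow_nnnorm_pow_one_div_tendsto_nhds_spectralRadius M
  have hev : ∀ᶠ k : ℕ in Filter.atTop,
      (‖M ^ k‖₊ : ℝ≥0∞) ^ (1 / (k : ℝ)) < ENNReal.ofReal c := hG.eventually_lt_const hc
  obtain ⟨N, hN, hN1⟩ := (hev.and (Filter.eventually_ge_atTop 1)).exists
  -- deduce ‖M ^ N‖₊ < (ofReal c) ^ N
  have hNpos : (0:ℝ) < N := by exact_mod_cast hN1
  have hpow : (‖M ^ N‖₊ : ℝ≥0∞) < (ENNReal.ofReal c) ^ N := by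
    have h1 : ((‖M ^ N‖₊ : ℝ≥0∞) ^ (1 / (N : ℝ))) ^ (N : ℝ) < (ENNReal.ofReal c) ^ (N : ℝ) :=
      ENNReal.rpow_lt_rpow hN hNpos
    rwa [← ENNReal.rpow_mul, one_div, inv_mul_cancel₀ (ne_of_gt hNpos),
      ENNReal.rpow_one, ENNReal.rpow_natCast] at h1
  -- real version: row sums of A ^ N are < c ^ N
  have hrow : ∀ i, ∑ j, (A ^ N) i j < c ^ N := by
    intro i
    have hnorm : ‖M ^ N‖ < c ^ N := by
      have := hpow
      rw [← ENNReal.ofReal_pow (le_of_lt hc0)] at this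
      have h2 : ENNReal.ofReal ‖M ^ N‖ < ENNReal.ofReal (c ^ N) := by
        rwa [ofReal_norm, enorm_eq_nnnorm]
      exact (ENNReal.ofReal_lt_ofReal_iff_of_nonneg (norm_nonneg _)).mp h2
    have hMN : M ^ N = (A ^ N).map (algebraMap ℝ ℂ) := by
      rw [hMdef, ← RingHom.mapMatrix_apply, ← RingHom.mapMatrix_apply, map_pow]
    have hsum : ∑ j, (A ^ N) i j ≤ ‖M ^ N‖ := by
      have h3 : (∑ j, ‖(M ^ N) i j‖₊ : ℝ≥0) ≤ ‖M ^ N‖₊ := by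
        rw [Matrix.linfty_opNNNorm_def]
        exact Finset.le_sup (f := fun i => ∑ j, ‖(M ^ N) i j‖₊) (mem_univ i)
      have h4 : ∑ j, (A ^ N) i j = ((∑ j, ‖(M ^ N) i j‖₊ : ℝ≥0) : ℝ) := by
        push_cast
        refine Finset.sum_congr rfl fun j _ => ?_
        rw [hMN]
        simp only [Matrix.map_apply, Complex.coe_algebraMap, coe_nnnorm, Complex.norm_real,
          Real.norm_eq_abs]
        exact (abs_of_nonneg (entry_pow_nonneg hA N i j)).symm
      rw [h4]
      exact_mod_cast h3
    exact lt_of_le_of_lt hsum hnorm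
  -- Neumann partial sums
  set u : ℕ → Fin n → ℝ := fun k => (A ^ k).mulVec (fun _ => 1) with hu
  have husum : ∀ k i, u k i = ∑ j, (A ^ k) i j := by
    intro k i
    simp [hu, Matrix.mulVec, dotProduct]
  have hu0 : ∀ i, u 0 i = 1 := by
    intro i
    simp [hu, pow_zero, Matrix.one_mulVec]
  have hunn : ∀ k i, 0 ≤ u k i := fun k i => by
    rw [husum]
    exact Finset.sum_nonneg fun j _ => entry_pow_nonneg hA k i j
  set f : Fin n → ℕ → ℝ := fun i k => c * (u k i / c ^ k) with hf
  refine ⟨fun i => ∑ k ∈ Finset.range N, u k i / c ^ k, ?_, ?_⟩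
  · intro i
    refine Finset.sum_pos' (fun k _ => div_nonneg (hunn k i) (pow_nonneg hc0.le k)) ?_
    refine ⟨0, Finset.mem_range.mpr hN1, ?_⟩
    rw [hu0]
    norm_num
  · intro i
    have hAx : A.mulVec (fun i => ∑ k ∈ Finset.range N, u k i / c ^ k) i
        = ∑ k ∈ Finset.range N, f i (k + 1) := by
      calc A.mulVec (fun i => ∑ k ∈ Finset.range N, u k i / c ^ k) i
          = ∑ j, A i j * ∑ k ∈ Finset.range N, u k j / c ^ k := by
            rw [Matrix.mulVec, dotProduct]
        _ = ∑ j, ∑ k ∈ Finset.range N, A i j * u k j / c ^ k := by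
            refine Finset.sum_congr rfl fun j _ => ?_
            rw [Finset.mul_sum]
            exact Finset.sum_congr rfl fun k _ => by ring
        _ = ∑ k ∈ Finset.range N, ∑ j, A i j * u k j / c ^ k := Finset.sum_comm
        _ = ∑ k ∈ Finset.range N, f i (k + 1) := by
            refine Finset.sum_congr rfl fun k _ => ?_
            have h5 : u (k + 1) = A.mulVec (u k) := by
              rw [hu]
              show (A ^ (k+1)).mulVec (fun _ => 1) = A.mulVec ((A ^ k).mulVec (fun _ => 1))
              rw [Matrix.mulVec_mulVec, ← pow_succ']
            have h6 : u (k + 1) i = ∑ j, A i j * u k j := by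
              rw [h5, Matrix.mulVec, dotProduct]
            rw [hf]
            simp only []
            rw [h6, ← Finset.sum_div, pow_succ']
            field_simp
    rw [hAx]
    have hsplit : ∑ k ∈ Finset.range N, f i (k + 1)
        = (∑ k ∈ Finset.range N, f i k) + f i N - f i 0 := by
      have := Finset.sum_range_succ' (f i) N
      have h2 := Finset.sum_range_succ (f i) N
      linarith [this, h2]
    have hf0 : f i 0 = c := by simp [hf, hu0]
    have hfN : f i N ≤ c := by
      rw [hf]
      simp only []
      have h7 : u N i / c ^ N ≤ 1 := by
        rw [div_le_one (pow_pos hc0 N)]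
        rw [husum]
        exact (hrow i).le
      nlinarith
    have hcx : c * ∑ k ∈ Finset.range N, u k i / c ^ k = ∑ k ∈ Finset.range N, f i k := by
      rw [Finset.mul_sum]
    rw [hsplit, ← hcx] at *
    linarith

lemma specRad_fin_zero (A : Matrix (Fin 0) (Fin 0) ℝ) : specRad A = 0 := by
  rw [specRad, spectralRadius]
  have hsub : Subsingleton (Matrix (Fin 0) (Fin 0) ℂ) :=
    ⟨fun a b => by ext i; exact i.elim0⟩
  have hsp : spectrum ℂ (A.map (algebraMap ℝ ℂ)) = ∅ := by
    ext z
    simp only [Set.mem_empty_iff_false, iff_false]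
    intro hz
    exact (spectrum.notMem_iff.mpr (@isUnit_of_subsingleton _ _ hsub _)) hz
  rw [hsp]
  simp

theorem stmt7 {n m : ℕ} (K : Matrix (Fin n) (Fin n) ℝ)
    (D : Fin m → Matrix (Fin n) (Fin n) ℝ) (hD : ∀ t, (D t).IsDiag)
    (hpos : ∀ t i j, 0 ≤ (K + D t) i j)
    (α : Fin m → ℝ) (hα : ∀ t, 0 ≤ α t) (hsum : ∑ t, α t = 1) :
    specRad (∑ t, α t • (K + D t)) ≤
      ∑ t, ENNReal.ofReal (α t) * specRad (K + D t) := by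
  classical
  rcases Nat.eq_zero_or_pos m with hm | hm
  · exfalso; subst hm; simp at hsum
  rcases Nat.eq_zero_or_pos n with hn | hn
  · subst hn
    rw [specRad_fin_zero]
    exact zero_le
  haveI : Nonempty (Fin n) := ⟨⟨0, hn⟩⟩
  set A : Fin m → Matrix (Fin n) (Fin n) ℝ := fun t => K + D t with hA
  have hAnn : ∀ t i j, 0 ≤ A t i j := hpos
  have hoff : ∀ t i j, i ≠ j → A t i j = K i j := by
    intro t i j hij
    simp [hA, Matrix.add_apply, (hD t) hij]
  have hfin : ∀ t, specRad (A t) ≠ ⊤ := by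
    intro t
    exact ne_top_of_le_ne_top ENNReal.coe_ne_top
      (spectrum.spectralRadius_le_nnnorm ((A t).map (algebraMap ℝ ℂ)))
  set ρ : Fin m → ℝ := fun t => (specRad (A t)).toReal with hρ
  have hρ0 : ∀ t, 0 ≤ ρ t := fun t => ENNReal.toReal_nonneg
  have hρeq : ∀ t, specRad (A t) = ENNReal.ofReal (ρ t) := fun t =>
    (ENNReal.ofReal_toReal (hfin t)).symm
  have hRHS : ∑ t, ENNReal.ofReal (α t) * specRad (A t)
      = ENNReal.ofReal (∑ t, α t * ρ t) := by
    rw [ENNReal.ofReal_sum_of_nonneg (fun t _ => mul_nonneg (hα t) (hρ0 t))]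
    refine Finset.sum_congr rfl fun t _ => ?_
    rw [ENNReal.ofReal_mul (hα t), ← hρeq t]
  rw [hRHS]
  set S := ∑ t, α t • A t with hS
  have hSapp : ∀ i j, S i j = ∑ t, α t * A t i j := by
    intro i j
    rw [hS]
    simp [Matrix.sum_apply, Matrix.smul_apply, smul_eq_mul]
  have hSnn : ∀ i j, 0 ≤ S i j := fun i j => by
    rw [hSapp]; exact Finset.sum_nonneg fun t _ => mul_nonneg (hα t) (hAnn t i j)
  refine ENNReal.le_of_forall_pos_le_add fun ε hε _ => ?_
  have hεR : (0:ℝ) < (ε : ℝ) := hε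
  have hxv : ∀ t : Fin m, ∃ x : Fin n → ℝ, (∀ i, 0 < x i) ∧
      ∀ i, (A t).mulVec x i ≤ (ρ t + (ε:ℝ)) * x i := by
    intro t
    refine exists_pos_mulVec_le (hAnn t) ?_
    rw [hρeq t]
    exact (ENNReal.ofReal_lt_ofReal_iff (by linarith [hρ0 t])).mpr (by linarith [hρ0 t])
  choose xv hxvpos hxvle using hxv
  set x : Fin n → ℝ := fun i => ∏ t, xv t i ^ (α t) with hx
  have hxpos : ∀ i, 0 < x i := fun i =>
    Finset.prod_pos fun t _ => Real.rpow_pos_of_pos (hxvpos t i) _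
  have hterm : ∀ i j, S i j * x j ≤ ∑ t, α t * (A t i j * xv t j / xv t i) * x i := by
    intro i j
    rcases eq_or_ne j i with rfl | hij
    · refine le_of_eq ?_
      rw [hSapp, Finset.sum_mul]
      refine Finset.sum_congr rfl fun t _ => ?_
      rw [mul_div_assoc, div_self (hxvpos t j).ne', mul_one]
    · -- off-diagonal : AM-GM
      have hKt : ∀ t, A t i j = K i j := fun t => hoff t i j (Ne.symm hij)
      have hSij : S i j = K i j := by
        rw [hSapp]
        rw [Finset.sum_congr rfl fun t _ => by rw [hKt t]]
        rw [← Finset.sum_mul, hsum, one_mul]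
      have hKnn : 0 ≤ K i j := by
        have := hAnn ⟨0, hm⟩ i j
        rwa [hKt ⟨0, hm⟩] at this
      set z : Fin m → ℝ := fun t => xv t j / xv t i with hz
      have hznn : ∀ t, 0 ≤ z t := fun t => div_nonneg (hxvpos t j).le (hxvpos t i).le
      have hgm : (∏ t, z t ^ (α t)) * x i = x j := by
        rw [hx, ← Finset.prod_mul_distrib]
        refine Finset.prod_congr rfl fun t _ => ?_
        rw [← Real.mul_rpow (hznn t) (hxvpos t i).le, hz,
          div_mul_cancel₀ _ (hxvpos t i).ne']
      have hamgm : ∏ t, z t ^ (α t) ≤ ∑ t, α t * z t :=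
        Real.geom_mean_le_arith_mean_weighted univ α z (fun t _ => hα t) hsum
          (fun t _ => hznn t)
      calc S i j * x j = K i j * ((∏ t, z t ^ (α t)) * x i) := by rw [hSij, hgm]
        _ ≤ K i j * ((∑ t, α t * z t) * x i) := by
            refine mul_le_mul_of_nonneg_left ?_ hKnn
            exact mul_le_mul_of_nonneg_right hamgm (hxpos i).le
        _ = ∑ t, α t * (A t i j * xv t j / xv t i) * x i := by
            rw [Finset.sum_mul, Finset.mul_sum]
            refine Finset.sum_congr rfl fun t _ => ?_
            have hzdef : z t = xv t j / xv t i := rfl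
            rw [hKt t, hzdef]
            ring
  have hkey : ∀ i, S.mulVec x i ≤ (∑ t, α t * (ρ t + (ε:ℝ))) * x i := by
    intro i
    calc S.mulVec x i = ∑ j, S i j * x j := by rw [Matrix.mulVec, dotProduct]
      _ ≤ ∑ j, ∑ t, α t * (A t i j * xv t j / xv t i) * x i :=
          Finset.sum_le_sum fun j _ => hterm i j
      _ = ∑ t, ∑ j, α t * (A t i j * xv t j / xv t i) * x i := Finset.sum_comm
      _ = ∑ t, α t / xv t i * ((A t).mulVec (xv t) i) * x i := by
          refine Finset.sum_congr rfl fun t _ => ?_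
          rw [Matrix.mulVec, dotProduct, Finset.mul_sum, Finset.sum_mul]
          refine Finset.sum_congr rfl fun j _ => ?_
          ring
      _ ≤ ∑ t, α t / xv t i * ((ρ t + (ε:ℝ)) * xv t i) * x i := by
          refine Finset.sum_le_sum fun t _ => ?_
          refine mul_le_mul_of_nonneg_right ?_ (hxpos i).le
          exact mul_le_mul_of_nonneg_left (hxvle t i)
            (div_nonneg (hα t) (hxvpos t i).le)
      _ = (∑ t, α t * (ρ t + (ε:ℝ))) * x i := by
          rw [Finset.sum_mul]
          refine Finset.sum_congr rfl fun t _ => ?_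
          have h9 : α t / xv t i * ((ρ t + (ε:ℝ)) * xv t i) = α t * (ρ t + (ε:ℝ)) := by
            rw [div_mul_eq_mul_div, mul_div_assoc, mul_div_assoc,
              div_self (hxvpos t i).ne', mul_one]
          rw [h9]
  have hmain : specRad S ≤ ENNReal.ofReal (∑ t, α t * (ρ t + (ε:ℝ))) :=
    specRad_le_of_mulVec_le hSnn hxpos hkey
  have hsimp : ∑ t, α t * (ρ t + (ε:ℝ)) = (∑ t, α t * ρ t) + (ε:ℝ) := by
    have h10 : ∑ t, α t * (ρ t + (ε:ℝ)) = (∑ t, α t * ρ t) + (∑ t, α t) * (ε:ℝ) := by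
      rw [Finset.sum_mul, ← Finset.sum_add_distrib]
      exact Finset.sum_congr rfl fun t _ => by ring
    rw [h10, hsum, one_mul]
  rw [hsimp] at hmain
  calc specRad S ≤ ENNReal.ofReal ((∑ t, α t * ρ t) + (ε:ℝ)) := hmain
    _ ≤ ENNReal.ofReal (∑ t, α t * ρ t) + ENNReal.ofReal (ε:ℝ) := ENNReal.ofReal_add_le
    _ = ENNReal.ofReal (∑ t, α t * ρ t) + ↑ε := by rw [ENNReal.ofReal_coe_nnreal]
end

section
/- Let K be a nonnegative n×n matrix, α ∈ [0,1], and S_α(K) the matrix with entries K(i,j)^α K(j,i)^{1−α}. Then r(S_α(K)) ≤ r(K). -/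
open scoped ENNReal
open Finset
section Aux
open scoped NNReal

attribute [local instance] Matrix.linftyOpNormedRing Matrix.linftyOpNormedAlgebra

open Filter Topology

/-- geometric mean is at most the max -/
lemma gm_le_max {x y α : ℝ} (hx : 0 ≤ x) (hy : 0 ≤ y) (h0 : 0 ≤ α) (h1 : α ≤ 1) :
    x ^ α * y ^ (1 - α) ≤ max x y := by
  have hm : 0 ≤ max x y := le_trans hx (le_max_left _ _)
  have hsum : α + (1 - α) = 1 := by ring
  calc x ^ α * y ^ (1 - α)
      ≤ (max x y) ^ α * (max x y) ^ (1 - α) :=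
        mul_le_mul (Real.rpow_le_rpow hx (le_max_left _ _) h0)
          (Real.rpow_le_rpow hy (le_max_right _ _) (by linarith))
          (Real.rpow_nonneg hy _) (Real.rpow_nonneg hm _)
    _ = (max x y) ^ (α + (1 - α)) := (Real.rpow_add' hm (by rw [hsum]; norm_num)).symm
    _ = max x y := by rw [hsum, Real.rpow_one]

/-- Hölder inequality in geometric-mean form -/
lemma sum_gm_le {ι : Type*} (s : Finset ι) (a b : ι → ℝ) {α : ℝ}
    (h0 : 0 ≤ α) (h1 : α ≤ 1)
    (ha : ∀ i ∈ s, 0 ≤ a i) (hb : ∀ i ∈ s, 0 ≤ b i) :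
    ∑ i ∈ s, a i ^ α * b i ^ (1 - α) ≤ (∑ i ∈ s, a i) ^ α * (∑ i ∈ s, b i) ^ (1 - α) := by
  rcases eq_or_lt_of_le h0 with h|h0'
  · simp [← h]
  rcases eq_or_lt_of_le h1 with h|h1'
  · simp [h]
  have hα : α ≠ 0 := ne_of_gt h0'
  have hα1 : (1 : ℝ) - α ≠ 0 := by linarith
  have hpq : Real.HolderConjugate (1/α) (1/(1-α)) := by
    constructor
    · simp only [one_div, inv_inv, inv_one]; ring
    · exact one_div_pos.mpr h0'
    · exact one_div_pos.mpr (by linarith)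
  have H := Real.inner_le_Lp_mul_Lq s (fun i => a i ^ α) (fun i => b i ^ (1 - α)) hpq
  have e1 : ∀ i ∈ s, |a i ^ α| ^ (1/α) = a i := by
    intro i hi
    rw [abs_of_nonneg (Real.rpow_nonneg (ha i hi) _), ← Real.rpow_mul (ha i hi),
      mul_one_div, div_self hα, Real.rpow_one]
  have e2 : ∀ i ∈ s, |b i ^ (1 - α)| ^ (1/(1-α)) = b i := by
    intro i hi
    rw [abs_of_nonneg (Real.rpow_nonneg (hb i hi) _), ← Real.rpow_mul (hb i hi),
      mul_one_div, div_self hα1, Real.rpow_one]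
  rw [Finset.sum_congr rfl e1, Finset.sum_congr rfl e2] at H
  simpa [one_div, inv_inv] using H

lemma pow_entry_nonneg {n : ℕ} {K : Matrix (Fin n) (Fin n) ℝ} (hK : ∀ i j, 0 ≤ K i j) :
    ∀ m i j, 0 ≤ (K ^ m) i j := by
  intro m
  induction m with
  | zero => intro i j; rw [pow_zero]; by_cases h : i = j <;> simp [Matrix.one_apply, h]
  | succ m ih =>
    intro i j
    rw [pow_succ, Matrix.mul_apply]
    exact Finset.sum_nonneg fun k _ => mul_nonneg (ih i k) (hK k j)

lemma pow_entry_le {n : ℕ} (K : Matrix (Fin n) (Fin n) ℝ) (hK : ∀ i j, 0 ≤ K i j)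
    {α : ℝ} (h0 : 0 ≤ α) (h1 : α ≤ 1) :
    ∀ m i j, ((Matrix.of fun i j => (K i j) ^ α * (K j i) ^ (1 - α)) ^ m) i j ≤
      ((K ^ m) i j) ^ α * ((K ^ m) j i) ^ (1 - α) := by
  set S : Matrix (Fin n) (Fin n) ℝ := Matrix.of fun i j => (K i j) ^ α * (K j i) ^ (1 - α)
    with hS
  have hSnn : ∀ i j, 0 ≤ S i j := fun i j =>
    mul_nonneg (Real.rpow_nonneg (hK i j) _) (Real.rpow_nonneg (hK j i) _)
  intro m
  induction m with
  | zero =>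
    intro i j
    rw [pow_zero, pow_zero]
    by_cases h : i = j
    · simp [Matrix.one_apply, h]
    · simp only [Matrix.one_apply_ne h, Matrix.one_apply_ne (fun hji => h (hji.symm)), le_refl]
      exact mul_nonneg (Real.rpow_nonneg le_rfl _) (Real.rpow_nonneg le_rfl _)
  | succ m ih =>
    intro i j
    rw [pow_succ, Matrix.mul_apply]
    have step : ∀ k ∈ Finset.univ, (S ^ m) i k * S k j ≤
        ((K ^ m) i k * K k j) ^ α * ((K ^ m) k i * K j k) ^ (1 - α) := by
      intro k _
      have hsk : S k j = (K k j) ^ α * (K j k) ^ (1 - α) := rfl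
      calc (S ^ m) i k * S k j
          ≤ (((K ^ m) i k) ^ α * ((K ^ m) k i) ^ (1 - α)) * ((K k j) ^ α * (K j k) ^ (1 - α)) := by
            rw [hsk]
            exact mul_le_mul_of_nonneg_right (ih i k) (hSnn k j)
        _ = ((K ^ m) i k * K k j) ^ α * ((K ^ m) k i * K j k) ^ (1 - α) := by
            rw [Real.mul_rpow (pow_entry_nonneg hK m i k) (hK k j),
              Real.mul_rpow (pow_entry_nonneg hK m k i) (hK j k)]
            ring
    calc ∑ k, (S ^ m) i k * S k j
        ≤ ∑ k, ((K ^ m) i k * K k j) ^ α * ((K ^ m) k i * K j k) ^ (1 - α) :=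
          Finset.sum_le_sum step
      _ ≤ (∑ k, (K ^ m) i k * K k j) ^ α * (∑ k, (K ^ m) k i * K j k) ^ (1 - α) :=
          sum_gm_le _ _ _ h0 h1
            (fun k _ => mul_nonneg (pow_entry_nonneg hK m i k) (hK k j))
            (fun k _ => mul_nonneg (pow_entry_nonneg hK m k i) (hK j k))
      _ = ((K ^ (m + 1)) i j) ^ α * ((K ^ (m + 1)) j i) ^ (1 - α) := by
          have hA : (∑ k, (K ^ m) i k * K k j) = (K ^ (m + 1)) i j := by
            rw [pow_succ, Matrix.mul_apply]
          have hB : (∑ k, (K ^ m) k i * K j k) = (K ^ (m + 1)) j i := by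
            rw [pow_succ', Matrix.mul_apply]
            exact Finset.sum_congr rfl fun k _ => mul_comm _ _
          rw [hA, hB]

lemma entry_nnnorm_le_linfty {n : ℕ} (A : Matrix (Fin n) (Fin n) ℂ) (i j : Fin n) :
    ‖A i j‖₊ ≤ ‖A‖₊ := by
  rw [Matrix.linfty_opNNNorm_def]
  have h1 : ‖A i j‖₊ ≤ ∑ k, ‖A i k‖₊ :=
    Finset.single_le_sum (f := fun k => ‖A i k‖₊) (fun k _ => zero_le) (Finset.mem_univ j)
  exact h1.trans (Finset.le_sup (f := fun i => ∑ k, ‖A i k‖₊) (Finset.mem_univ i))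

theorem stmt10 {n : ℕ} (K : Matrix (Fin n) (Fin n) ℝ) (hK : ∀ i j, 0 ≤ K i j)
    (α : ℝ) (hα : α ∈ Set.Icc (0:ℝ) 1) :
    specRad (Matrix.of fun i j => (K i j) ^ α * (K j i) ^ (1 - α)) ≤ specRad K := by
  obtain ⟨h0, h1⟩ := hα
  rcases Nat.eq_zero_or_pos n with hn | hn
  · subst hn
    have : (Matrix.of fun i j => (K i j) ^ α * (K j i) ^ (1 - α)) = K := by
      ext i j; exact i.elim0
    rw [this]
  haveI : Nonempty (Fin n) := Fin.pos_iff_nonempty.mp hn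
  set S : Matrix (Fin n) (Fin n) ℝ := Matrix.of fun i j => (K i j) ^ α * (K j i) ^ (1 - α)
    with hSdef
  have hSnn : ∀ i j, 0 ≤ S i j := fun i j =>
    mul_nonneg (Real.rpow_nonneg (hK i j) _) (Real.rpow_nonneg (hK j i) _)
  set f : ℝ →+* ℂ := algebraMap ℝ ℂ with hf
  -- nnnorm of mapped real matrix powers comparison
  have hmapnn : ∀ (A : Matrix (Fin n) (Fin n) ℝ) i j, ‖(A.map f) i j‖₊ = ‖A i j‖₊ := by
    intro A i j
    simp only [Matrix.map_apply, hf, Complex.coe_algebraMap, Complex.nnnorm_real]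
  have hbound : ∀ m : ℕ, ‖(S.map f) ^ m‖₊ ≤ (n : ℝ≥0) * ‖(K.map f) ^ m‖₊ := by
    intro m
    have hSpow : (S.map f) ^ m = (S ^ m).map f := by
      rw [← RingHom.mapMatrix_apply, ← RingHom.mapMatrix_apply, map_pow]
    have hKpow : (K.map f) ^ m = (K ^ m).map f := by
      rw [← RingHom.mapMatrix_apply, ← RingHom.mapMatrix_apply, map_pow]
    set c : ℝ≥0 := ‖(K.map f) ^ m‖₊ with hc
    have hentry : ∀ i j, ‖(S ^ m) i j‖₊ ≤ c := by
      intro i j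
      have h1' : (S ^ m) i j ≤ ((K ^ m) i j) ^ α * ((K ^ m) j i) ^ (1 - α) :=
        pow_entry_le K hK h0 h1 m i j
      have h2' : ((K ^ m) i j) ^ α * ((K ^ m) j i) ^ (1 - α) ≤
          max ((K ^ m) i j) ((K ^ m) j i) :=
        gm_le_max (pow_entry_nonneg hK m i j) (pow_entry_nonneg hK m j i) h0 h1
      have h3' : max ((K ^ m) i j) ((K ^ m) j i) ≤ (c : ℝ) := by
        have hij : (K ^ m) i j ≤ (c : ℝ) := by
          have := entry_nnnorm_le_linfty ((K ^ m).map f) i j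
          rw [hmapnn] at this
          calc (K ^ m) i j ≤ |(K ^ m) i j| := le_abs_self _
            _ = (‖(K ^ m) i j‖₊ : ℝ) := by rw [coe_nnnorm, Real.norm_eq_abs]
            _ ≤ (c : ℝ) := by rw [hc, hKpow]; exact_mod_cast this
        have hji : (K ^ m) j i ≤ (c : ℝ) := by
          have := entry_nnnorm_le_linfty ((K ^ m).map f) j i
          rw [hmapnn] at this
          calc (K ^ m) j i ≤ |(K ^ m) j i| := le_abs_self _
            _ = (‖(K ^ m) j i‖₊ : ℝ) := by rw [coe_nnnorm, Real.norm_eq_abs]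
            _ ≤ (c : ℝ) := by rw [hc, hKpow]; exact_mod_cast this
        exact max_le hij hji
      have : (S ^ m) i j ≤ (c : ℝ) := le_trans h1' (le_trans h2' h3')
      rw [← NNReal.coe_le_coe, coe_nnnorm, Real.norm_eq_abs,
        abs_of_nonneg (pow_entry_nonneg (K := S) hSnn m i j)]
      exact this
    rw [hSpow, Matrix.linfty_opNNNorm_def]
    refine Finset.sup_le fun i _ => ?_
    calc ∑ j, ‖((S ^ m).map f) i j‖₊ = ∑ j, ‖(S ^ m) i j‖₊ := by
          exact Finset.sum_congr rfl fun j _ => hmapnn _ i j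
      _ ≤ ∑ _j : Fin n, c := Finset.sum_le_sum fun j _ => hentry i j
      _ = (n : ℝ≥0) * c := by rw [Finset.sum_const, Finset.card_univ, Fintype.card_fin,
          nsmul_eq_mul]
  -- Gelfand's formula
  have gelS := spectrum.pow_nnnorm_pow_one_div_tendsto_nhds_spectralRadius (S.map f)
  have gelK := spectrum.pow_nnnorm_pow_one_div_tendsto_nhds_spectralRadius (K.map f)
  have key : ∀ m : ℕ, (‖(S.map f) ^ m‖₊ : ℝ≥0∞) ^ (1/(m:ℝ)) ≤
      ((n : ℝ≥0) : ℝ≥0∞) ^ (1/(m:ℝ)) * (‖(K.map f) ^ m‖₊ : ℝ≥0∞) ^ (1/(m:ℝ)) := by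
    intro m
    have hm : (0:ℝ) ≤ 1/(m:ℝ) := by positivity
    rw [← ENNReal.mul_rpow_of_nonneg _ _ hm]
    refine ENNReal.rpow_le_rpow ?_ hm
    rw [← ENNReal.coe_mul]
    exact_mod_cast hbound m
  have hnlim : Filter.Tendsto (fun m : ℕ => ((n : ℝ≥0) : ℝ≥0∞) ^ (1/(m:ℝ)))
      Filter.atTop (nhds 1) := by
    have hreal : Filter.Tendsto (fun m : ℕ => ((n : ℝ)) ^ (1/(m:ℝ)))
        Filter.atTop (nhds 1) := by
      have hne : (n : ℝ) ≠ 0 := by positivity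
      have := (Real.continuousAt_const_rpow (b := 0) hne).tendsto.comp
        tendsto_one_div_atTop_nhds_zero_nat
      simpa [Function.comp_def, Real.rpow_zero] using this
    have hnn : Filter.Tendsto (fun m : ℕ => ((n : ℝ≥0)) ^ (1/(m:ℝ)))
        Filter.atTop (nhds 1) := by
      rw [← NNReal.tendsto_coe]
      simpa [NNReal.coe_rpow] using hreal
    have h2 := (ENNReal.tendsto_coe (f := Filter.atTop)
      (m := fun m : ℕ => ((n : ℝ≥0)) ^ (1/(m:ℝ))) (a := 1)).mpr hnn
    exact h2.congr fun m => ENNReal.coe_rpow_of_nonneg _ (by positivity)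
  have hprod : Filter.Tendsto
      (fun m : ℕ => ((n : ℝ≥0) : ℝ≥0∞) ^ (1/(m:ℝ)) * (‖(K.map f) ^ m‖₊ : ℝ≥0∞) ^ (1/(m:ℝ)))
      Filter.atTop (nhds (1 * spectralRadius ℂ (K.map f))) :=
    ENNReal.Tendsto.mul hnlim (Or.inl one_ne_zero) gelK (Or.inr ENNReal.one_ne_top)
  rw [one_mul] at hprod
  exact le_of_tendsto_of_tendsto' gelS hprod key

end Aux
end
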